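/- arXiv:2209.13282 — 8 statements merged into one kernel-verified Lean document; each statement's English description precedes it below -/
import Mathlib

section
/- If A is a finite-dimensional associative algebra admitting a faithful linear functional, then A has a multiplicative unit. -/
/-- A finite-dimensional associative ℂ-algebra admitting a faithful
linear functional is unital. -/
theorem unital_of_faithful_functional
    {A : Type*} [NonUnitalRing A] [Module ℂ A]
    [IsScalarTower ℂ A A] [SMulCommClass ℂ A A] [FiniteDimensional ℂ A]
    (ω : A →ₗ[ℂ] ℂ)
    (hleft : ∀ a : A, (∀ c : A, ω (a * c) = 0) → a = 0)
    (hright : ∀ c : A, (∀ a : A, ω (a * c) = 0) → c = 0) :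
    ∃ e : A, ∀ a : A, e * a = a ∧ a * e = a := by
  have hdim : Module.finrank ℂ A = Module.finrank ℂ (Module.Dual ℂ A) :=
    (Subspace.dual_finrank_eq).symm
  -- left multiplication map into the dual
  set L : A →ₗ[ℂ] Module.Dual ℂ A := (LinearMap.mul ℂ A).compr₂ ω with hL
  have hLapp : ∀ a c : A, L a c = ω (a * c) := fun a c => rfl
  have hLinj : Function.Injective L := by
    rw [← LinearMap.ker_eq_bot, LinearMap.ker_eq_bot']
    intro a ha
    exact hleft a fun c => by
      have := congrArg (fun f => f c) ha
      simpa [hLapp] using this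
  have hLsurj : Function.Surjective L :=
    (LinearMap.injective_iff_surjective_of_finrank_eq_finrank hdim).mp hLinj
  -- right multiplication map into the dual
  set R : A →ₗ[ℂ] Module.Dual ℂ A := (LinearMap.mul ℂ A).flip.compr₂ ω with hR
  have hRapp : ∀ c a : A, R c a = ω (a * c) := fun c a => rfl
  have hRinj : Function.Injective R := by
    rw [← LinearMap.ker_eq_bot, LinearMap.ker_eq_bot']
    intro c hc
    exact hright c fun a => by
      have := congrArg (fun f => f a) hc
      simpa [hRapp] using this
  have hRsurj : Function.Surjective R :=
    (LinearMap.injective_iff_surjective_of_finrank_eq_finrank hdim).mp hRinj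
  obtain ⟨e, he⟩ := hLsurj ω
  obtain ⟨f, hf⟩ := hRsurj ω
  have heω : ∀ c : A, ω (e * c) = ω c := fun c => by
    have := congrArg (fun g => g c) he; simpa [hLapp] using this
  have hfω : ∀ a : A, ω (a * f) = ω a := fun a => by
    have := congrArg (fun g => g a) hf; simpa [hRapp] using this
  have hel : ∀ a : A, e * a = a := by
    intro a
    have : e * a - a = 0 := hleft _ fun c => by
      simp [sub_mul, mul_assoc, heω (a * c)]
    exact sub_eq_zero.mp this
  have hfr : ∀ a : A, a * f = a := by
    intro a
    have : a * f - a = 0 := hright _ fun x => by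
      simp [mul_sub, ← mul_assoc, hfω (x * a)]
    exact sub_eq_zero.mp this
  have hef : e = f := by rw [← hfr e, hel f]
  exact ⟨e, fun a => ⟨hel a, by rw [hef]; exact hfr a⟩⟩
end

section
/- A finite-dimensional algebra with a non-degenerate product need not be unital: the subspace A of the 3×3 matrix algebra spanned by the matrix units e₁₁, e₁₂, e₁₃, e₂₃, e₃₃ is an idempotent subalgebra (A² = A) whose multiplication is non-degenerate, but A has no unit element. -/
open Matrix

/-- The matrix unit `e i j` in `M₃(ℂ)`. -/
noncomputable def matUnit (i j : Fin 3) : Matrix (Fin 3) (Fin 3) ℂ :=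
  Matrix.single i j 1

/-- The subspace of `M₃(ℂ)` spanned by `e₁₁, e₁₂, e₁₃, e₂₃, e₃₃`. -/
noncomputable def Asub : Submodule ℂ (Matrix (Fin 3) (Fin 3) ℂ) :=
  Submodule.span ℂ
    {matUnit 0 0, matUnit 0 1, matUnit 0 2, matUnit 1 2, matUnit 2 2}

lemma mem_Asub_iff (x : Matrix (Fin 3) (Fin 3) ℂ) :
    x ∈ Asub ↔ x 1 0 = 0 ∧ x 1 1 = 0 ∧ x 2 0 = 0 ∧ x 2 1 = 0 := by
  constructor
  · intro hx
    induction hx using Submodule.span_induction with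
    | mem m hm =>
      rcases hm with h | h | h | h | h <;> subst h <;>
        simp [matUnit, Matrix.single, Matrix.of_apply]
    | zero => simp
    | add a b _ _ ha hb =>
      simp [Matrix.add_apply, ha.1, ha.2.1, ha.2.2.1, ha.2.2.2,
        hb.1, hb.2.1, hb.2.2.1, hb.2.2.2]
    | smul c a _ ha =>
      simp [Matrix.smul_apply, ha.1, ha.2.1, ha.2.2.1, ha.2.2.2]
  · rintro ⟨h10, h11, h20, h21⟩
    have : x = x 0 0 • matUnit 0 0 + x 0 1 • matUnit 0 1 + x 0 2 • matUnit 0 2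
        + x 1 2 • matUnit 1 2 + x 2 2 • matUnit 2 2 := by
      ext i j
      fin_cases i <;> fin_cases j <;>
        simp [matUnit, Matrix.single, Matrix.add_apply, Matrix.smul_apply,
          h10, h11, h20, h21]
    rw [this]
    have m00 : matUnit 0 0 ∈ Asub := Submodule.subset_span (by simp)
    have m01 : matUnit 0 1 ∈ Asub := Submodule.subset_span (by simp)
    have m02 : matUnit 0 2 ∈ Asub := Submodule.subset_span (by simp)
    have m12 : matUnit 1 2 ∈ Asub := Submodule.subset_span (by simp)
    have m22 : matUnit 2 2 ∈ Asub := Submodule.subset_span (by simp)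
    exact Submodule.add_mem _ (Submodule.add_mem _ (Submodule.add_mem _
      (Submodule.add_mem _ (Submodule.smul_mem _ _ m00) (Submodule.smul_mem _ _ m01))
      (Submodule.smul_mem _ _ m02)) (Submodule.smul_mem _ _ m12))
      (Submodule.smul_mem _ _ m22)

/-- `Asub` is a subalgebra of `M₃(ℂ)`, it is idempotent (`A² = A`),
its multiplication is non-degenerate, but it has no unit element. -/
theorem Asub_idempotent_nondegenerate_not_unital :
    (∀ x ∈ Asub, ∀ y ∈ Asub, x * y ∈ Asub) ∧
    (∀ z ∈ Asub, z ∈ Submodule.span ℂ {m | ∃ x ∈ Asub, ∃ y ∈ Asub, m = x * y}) ∧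
    (∀ x ∈ Asub, (∀ y ∈ Asub, x * y = 0) → x = 0) ∧
    (∀ x ∈ Asub, (∀ y ∈ Asub, y * x = 0) → x = 0) ∧
    ¬ (∃ e ∈ Asub, ∀ x ∈ Asub, e * x = x ∧ x * e = x) := by
  have m00 : matUnit 0 0 ∈ Asub := Submodule.subset_span (by simp)
  have m01 : matUnit 0 1 ∈ Asub := Submodule.subset_span (by simp)
  have m02 : matUnit 0 2 ∈ Asub := Submodule.subset_span (by simp)
  have m12 : matUnit 1 2 ∈ Asub := Submodule.subset_span (by simp)
  have m22 : matUnit 2 2 ∈ Asub := Submodule.subset_span (by simp)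
  refine ⟨?_, ?_, ?_, ?_, ?_⟩
  · intro x hx y hy
    rw [mem_Asub_iff] at hx hy ⊢
    obtain ⟨hx1, hx2, hx3, hx4⟩ := hx
    obtain ⟨hy1, hy2, hy3, hy4⟩ := hy
    refine ⟨?_, ?_, ?_, ?_⟩ <;>
      simp [Matrix.mul_apply, Fin.sum_univ_three, hx1, hx2, hx3, hx4, hy1, hy2, hy3, hy4]
  · intro z hz
    have hsub : ({matUnit 0 0, matUnit 0 1, matUnit 0 2, matUnit 1 2, matUnit 2 2} :
        Set (Matrix (Fin 3) (Fin 3) ℂ)) ⊆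
        {m | ∃ x ∈ Asub, ∃ y ∈ Asub, m = x * y} := by
      rintro m (h | h | h | h | h) <;> subst h
      · exact ⟨matUnit 0 0, m00, matUnit 0 0, m00, by
          simp [matUnit, Matrix.single_mul_single_same]⟩
      · exact ⟨matUnit 0 0, m00, matUnit 0 1, m01, by
          simp [matUnit, Matrix.single_mul_single_same]⟩
      · exact ⟨matUnit 0 0, m00, matUnit 0 2, m02, by
          simp [matUnit, Matrix.single_mul_single_same]⟩
      · exact ⟨matUnit 1 2, m12, matUnit 2 2, m22, by
          simp [matUnit, Matrix.single_mul_single_same]⟩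
      · exact ⟨matUnit 2 2, m22, matUnit 2 2, m22, by
          simp [matUnit, Matrix.single_mul_single_same]⟩
    exact Submodule.span_mono hsub hz
  · intro x hx h
    obtain ⟨h10, h11, h20, h21⟩ := (mem_Asub_iff x).1 hx
    have h1 := h _ m01
    have h2 := h _ m12
    have h3 := h _ m22
    ext i j
    have e1 := congrFun (congrFun h1 0 : _) 1
    have e2 := congrFun (congrFun h2 0 : _) 2
    have e3 := congrFun (congrFun h3 0 : _) 2
    have e4 := congrFun (congrFun h3 1 : _) 2
    have e5 := congrFun (congrFun h3 2 : _) 2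
    simp [matUnit, Matrix.mul_apply, Fin.sum_univ_three, Matrix.single] at e1 e2 e3 e4 e5
    fin_cases i <;> fin_cases j <;>
      simp_all
  · intro x hx h
    obtain ⟨h10, h11, h20, h21⟩ := (mem_Asub_iff x).1 hx
    have h1 := h _ m00
    have h2 := h _ m01
    have h3 := h _ m12
    ext i j
    have e1 := congrFun (congrFun h1 0 : _) 0
    have e2 := congrFun (congrFun h1 0 : _) 1
    have e3 := congrFun (congrFun h1 0 : _) 2
    have e4 := congrFun (congrFun h2 0 : _) 2
    have e5 := congrFun (congrFun h3 1 : _) 2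
    simp [matUnit, Matrix.mul_apply, Fin.sum_univ_three, Matrix.single] at e1 e2 e3 e4 e5
    fin_cases i <;> fin_cases j <;>
      simp_all
  · rintro ⟨e, he, hmul⟩
    obtain ⟨h10, h11, h20, h21⟩ := (mem_Asub_iff e).1 he
    have h := (hmul _ m12).1
    have e1 := congrFun (congrFun h 1 : _) 2
    simp [matUnit, Matrix.mul_apply, Fin.sum_univ_three, Matrix.single] at e1
    simp_all
end

section
/- Let A and B be finite-dimensional unital ℂ-algebras with a non-degenerate bilinear pairing ⟨·,·⟩ : A × B → ℂ, and let Δ be the coproduct on B induced by the product of A (⟨aa', b⟩ = ⟨a ⊗ a', Δ(b)⟩). Then the counit ε_B on B defined by ε_B(b) = ⟨1, b⟩ is an algebra homomorphism if and only if Δ(1_A) = 1_A ⊗ 1_A holds for the induced coproduct on A. -/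
open TensorProduct

/-- The pairing of `A ⊗ A` with the pair `(b, b')`, i.e. `x ⊗ y ↦ ⟨x,b⟩⟨y,b'⟩`. -/
noncomputable def pairTT {A B : Type*} [AddCommGroup A] [Module ℂ A]
    [AddCommGroup B] [Module ℂ B]
    (β : A →ₗ[ℂ] B →ₗ[ℂ] ℂ) (b b' : B) : A ⊗[ℂ] A →ₗ[ℂ] ℂ :=
  (LinearMap.mul' ℂ ℂ).comp (TensorProduct.map (β.flip b) (β.flip b'))

lemma pairTT_tmul {A B : Type*} [AddCommGroup A] [Module ℂ A]
    [AddCommGroup B] [Module ℂ B]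
    (β : A →ₗ[ℂ] B →ₗ[ℂ] ℂ) (b b' : B) (a a' : A) :
    pairTT β b b' (a ⊗ₜ[ℂ] a') = β a b * β a' b' := rfl

lemma pairTT_separates {A B : Type*} [AddCommGroup A] [Module ℂ A]
    [AddCommGroup B] [Module ℂ B] [FiniteDimensional ℂ B]
    (β : A →ₗ[ℂ] B →ₗ[ℂ] ℂ)
    (hβA : ∀ a : A, (∀ b : B, β a b = 0) → a = 0)
    (x : A ⊗[ℂ] A) (hx : ∀ b b' : B, pairTT β b b' x = 0) : x = 0 := by
  classical
  set f : A →ₗ[ℂ] Module.Dual ℂ B := β with hfdef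
  have hf : Function.Injective f := by
    intro a a' h
    have h0 : a - a' = 0 := hβA (a - a') (fun b => by
      have hb : β a b = β a' b := by rw [show β a = β a' from h]
      simp [hfdef, hb])
    exact sub_eq_zero.mp h0
  have hmap : Function.Injective (TensorProduct.map f f) := by
    rw [← LinearMap.rTensor_comp_lTensor]
    exact (Module.Flat.rTensor_preserves_injective_linearMap f hf).comp
      (Module.Flat.lTensor_preserves_injective_linearMap f hf)
  have hdd : Function.Injective (TensorProduct.dualDistrib ℂ B B) :=
    (TensorProduct.dualDistribEquiv ℂ B B).injective
  have hrepr : ∀ (y : A ⊗[ℂ] A) (b b' : B),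
      TensorProduct.dualDistrib ℂ B B (TensorProduct.map f f y) (b ⊗ₜ[ℂ] b')
        = pairTT β b b' y := by
    intro y b b'
    induction y using TensorProduct.induction_on with
    | zero => simp
    | tmul a a' => rfl
    | add y z hy hz => simp only [map_add, LinearMap.add_apply, hy, hz]
  have h0 : TensorProduct.dualDistrib ℂ B B (TensorProduct.map f f x) = 0 := by
    refine TensorProduct.ext' fun b b' => ?_
    rw [hrepr x b b', hx b b']
    rfl
  have h1 : TensorProduct.map f f x = 0 := hdd (by rw [h0]; simp)
  exact hmap (by rw [h1]; simp)

/-- For a non-degenerate pairing of finite-dimensional unital ℂ-algebras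
`A` and `B`, with induced coproduct `Δ` on `A` (determined by
`⟨Δ a, b ⊗ b'⟩ = ⟨a, b * b'⟩`), the counit `ε_B = ⟨1, ·⟩` on `B` is an algebra
homomorphism if and only if `Δ 1 = 1 ⊗ 1`. -/
theorem counitB_hom_iff_coprodA_unital
    {A B : Type*} [Ring A] [Algebra ℂ A] [FiniteDimensional ℂ A]
    [Ring B] [Algebra ℂ B] [FiniteDimensional ℂ B]
    (β : A →ₗ[ℂ] B →ₗ[ℂ] ℂ)
    (hβA : ∀ a : A, (∀ b : B, β a b = 0) → a = 0)
    (hβB : ∀ b : B, (∀ a : A, β a b = 0) → b = 0)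
    (Δ : A →ₗ[ℂ] A ⊗[ℂ] A)
    (hΔ : ∀ (a : A) (b b' : B), pairTT β b b' (Δ a) = β a (b * b')) :
    (∀ b b' : B, β 1 (b * b') = β 1 b * β 1 b') ↔
      Δ 1 = (1 : A) ⊗ₜ[ℂ] (1 : A) := by
  constructor
  · intro h
    have := pairTT_separates β hβA (Δ 1 - (1 : A) ⊗ₜ[ℂ] (1 : A)) (fun b b' => by
      simp only [map_sub, hΔ 1 b b', pairTT_tmul, h b b', sub_self])
    exact sub_eq_zero.mp this
  · intro h b b'
    rw [← hΔ 1 b b', h, pairTT_tmul]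
end

section
/- Let A and B be finite-dimensional unital *-algebras with a non-degenerate pairing. Then there exist unique bijective linear maps S_A : A → A and S_B : B → B satisfying ⟨S_A(a)*, b⟩ = conj(⟨a, b*⟩) and ⟨a, S_B(b)*⟩ = conj(⟨a*, b⟩) for all a, b, and these maps are adjoint to each other: ⟨S_A(a), b⟩ = ⟨a, S_B(b)⟩ for all a ∈ A, b ∈ B. -/
open Module

lemma preantipode_aux
    {A B : Type*} [Ring A] [Algebra ℂ A] [StarRing A] [StarModule ℂ A]
    [FiniteDimensional ℂ A]
    [Ring B] [Algebra ℂ B] [StarRing B] [StarModule ℂ B]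
    [FiniteDimensional ℂ B]
    (β : A →ₗ[ℂ] B →ₗ[ℂ] ℂ)
    (hβA : ∀ a : A, (∀ b : B, β a b = 0) → a = 0)
    (hβB : ∀ b : B, (∀ a : A, β a b = 0) → b = 0) :
    ∃ SA : A →ₗ[ℂ] A, Function.Bijective SA ∧
      ∀ (a : A) (b : B), β (star (SA a)) b = starRingEnd ℂ (β a (star b)) := by
  have hinj : Function.Injective β := by
    rw [← LinearMap.ker_eq_bot, LinearMap.ker_eq_bot']
    intro a ha
    exact hβA a (fun b => by rw [ha]; rfl)
  have hinj' : Function.Injective β.flip := by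
    rw [← LinearMap.ker_eq_bot, LinearMap.ker_eq_bot']
    intro b hb
    exact hβB b (fun a => by have := congrFun (congrArg DFunLike.coe hb) a; simpa using this)
  have hd1 : finrank ℂ A ≤ finrank ℂ B := by
    have := LinearMap.finrank_le_finrank_of_injective hinj
    simpa [Subspace.dual_finrank_eq] using this
  have hd2 : finrank ℂ B ≤ finrank ℂ A := by
    have := LinearMap.finrank_le_finrank_of_injective hinj'
    simpa [Subspace.dual_finrank_eq] using this
  have heq : finrank ℂ A = finrank ℂ (B →ₗ[ℂ] ℂ) := by
    have : finrank ℂ (B →ₗ[ℂ] ℂ) = finrank ℂ B := Subspace.dual_finrank_eq (K := ℂ) (V := B)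
    omega
  have hsurj : Function.Surjective β :=
    (LinearMap.injective_iff_surjective_of_finrank_eq_finrank heq).mp hinj
  let e : A ≃ₗ[ℂ] (B →ₗ[ℂ] ℂ) := LinearEquiv.ofBijective β ⟨hinj, hsurj⟩
  have he : ∀ a, e a = β a := fun a => rfl
  let g : A → (B →ₗ[ℂ] ℂ) := fun a =>
    { toFun := fun b => starRingEnd ℂ (β a (star b))
      map_add' := fun b b' => by simp
      map_smul' := fun c b => by simp [mul_comm] }
  have hg : ∀ a b, g a b = starRingEnd ℂ (β a (star b)) := fun a b => rfl
  have hgadd : ∀ a a', g (a + a') = g a + g a' := by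
    intro a a'; ext b; simp [hg]
  have hgsmul : ∀ (c : ℂ) a, g (c • a) = starRingEnd ℂ c • g a := by
    intro c a; ext b; simp [hg]
  let S : A →ₗ[ℂ] A :=
    { toFun := fun a => star (e.symm (g a))
      map_add' := fun a a' => by rw [hgadd, map_add, star_add]
      map_smul' := fun c a => by
        rw [hgsmul, map_smul, star_smul, RingHom.id_apply, Complex.star_def,
          Complex.conj_conj]
    }
  have hS : ∀ a, S a = star (e.symm (g a)) := fun a => rfl
  have key : ∀ (a : A) (b : B), β (star (S a)) b = starRingEnd ℂ (β a (star b)) := by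
    intro a b
    rw [hS, star_star, ← hg a b]
    have : β (e.symm (g a)) = g a := by
      rw [← he, e.apply_symm_apply]
    rw [this]
  refine ⟨S, ?_, key⟩
  rw [Function.Bijective, ← LinearMap.injective_iff_surjective, and_self]
  intro a a' h
  have h1 : e.symm (g a) = e.symm (g a') := star_injective (by simpa [hS] using h)
  have h2 : g a = g a' := e.symm.injective h1
  have h3 : ∀ b : B, β a b = β a' b := by
    intro b
    have := congrFun (congrArg DFunLike.coe h2) (star b)
    simp only [hg, star_star] at this
    exact (starRingEnd ℂ).injective this
  have : a - a' = 0 := hβA _ (fun b => by simp [h3 b])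
  exact sub_eq_zero.mp this

/-- For a non-degenerate pairing of finite-dimensional unital
*-algebras `A` and `B`, there exist unique bijective linear maps `S_A` and `S_B`
with `⟨(S_A a)*, b⟩ = conj ⟨a, b*⟩` and `⟨a, (S_B b)*⟩ = conj ⟨a*, b⟩`, and these
maps are adjoint to each other: `⟨S_A a, b⟩ = ⟨a, S_B b⟩`. -/
theorem exists_unique_preantipodes
    {A B : Type*} [Ring A] [Algebra ℂ A] [StarRing A] [StarModule ℂ A]
    [FiniteDimensional ℂ A]
    [Ring B] [Algebra ℂ B] [StarRing B] [StarModule ℂ B]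
    [FiniteDimensional ℂ B]
    (β : A →ₗ[ℂ] B →ₗ[ℂ] ℂ)
    (hβA : ∀ a : A, (∀ b : B, β a b = 0) → a = 0)
    (hβB : ∀ b : B, (∀ a : A, β a b = 0) → b = 0) :
    ∃ SA : A →ₗ[ℂ] A, ∃ SB : B →ₗ[ℂ] B,
      Function.Bijective SA ∧ Function.Bijective SB ∧
      (∀ (a : A) (b : B), β (star (SA a)) b = starRingEnd ℂ (β a (star b))) ∧
      (∀ (a : A) (b : B), β a (star (SB b)) = starRingEnd ℂ (β (star a) b)) ∧
      (∀ (a : A) (b : B), β (SA a) b = β a (SB b)) ∧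
      (∀ SA' : A →ₗ[ℂ] A,
        (∀ (a : A) (b : B), β (star (SA' a)) b = starRingEnd ℂ (β a (star b))) →
          SA' = SA) ∧
      (∀ SB' : B →ₗ[ℂ] B,
        (∀ (a : A) (b : B), β a (star (SB' b)) = starRingEnd ℂ (β (star a) b)) →
          SB' = SB) := by
  obtain ⟨SA, hSAbij, hSA⟩ := preantipode_aux β hβA hβB
  obtain ⟨SB, hSBbij, hSB⟩ := preantipode_aux β.flip
    (fun b hb => hβB b (fun a => hb a)) (fun a ha => hβA a (fun b => ha b))
  have hSB' : ∀ (a : A) (b : B), β a (star (SB b)) = starRingEnd ℂ (β (star a) b) :=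
    fun a b => hSB b a
  refine ⟨SA, SB, hSAbij, hSBbij, hSA, hSB', ?_, ?_, ?_⟩
  · intro a b
    apply (starRingEnd ℂ).injective
    have h1 : β (star (SA a)) (star (SB b)) = starRingEnd ℂ (β (SA a) b) := by
      have := hSB' (star (SA a)) b
      rwa [star_star] at this
    have h2 : β (star (SA a)) (star (SB b)) = starRingEnd ℂ (β a (SB b)) := by
      have := hSA a (star (SB b))
      rwa [star_star] at this
    rw [← h1, ← h2]
  · intro SA' h
    ext a
    have : star (SA' a) - star (SA a) = 0 := by
      apply hβA
      intro b
      simp [h a b, hSA a b, sub_eq_zero]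
    have := sub_eq_zero.mp this
    exact star_injective this
  · intro SB' h
    ext b
    have : star (SB' b) - star (SB b) = 0 := by
      apply hβB
      intro a
      simp [h a b, hSB' a b, sub_eq_zero]
    have := sub_eq_zero.mp this
    exact star_injective this
end

section
/- For a pairing of *-algebras A and B (i.e., the induced coproducts are *-maps), the maps S on A and B satisfy S(S(b) ▷ a) = S(a) ◁ b and S(S(a) ▷ b) = S(b) ◁ a for all a ∈ A, b ∈ B. -/
/-- For a pairing of finite-dimensional unital *-algebras (with
pre-antipodes `S_A`, `S_B` which are anti-multiplicative and adjoint to each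
other, as happens when the induced coproducts are *-maps), the identities
`S(S(b) ▷ a) = S(a) ◁ b` and `S(S(a) ▷ b) = S(b) ◁ a` hold. -/
theorem antipode_action_identities
    {A B : Type*} [Ring A] [Algebra ℂ A] [StarRing A] [StarModule ℂ A]
    [FiniteDimensional ℂ A]
    [Ring B] [Algebra ℂ B] [StarRing B] [StarModule ℂ B]
    [FiniteDimensional ℂ B]
    (β : A →ₗ[ℂ] B →ₗ[ℂ] ℂ)
    (hβA : ∀ a : A, (∀ b : B, β a b = 0) → a = 0)
    (hβB : ∀ b : B, (∀ a : A, β a b = 0) → b = 0)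
    (SA : A →ₗ[ℂ] A) (SB : B →ₗ[ℂ] B)
    -- the defining relations of the pre-antipodes coming from the involutions
    (hSAstar : ∀ (a : A) (b : B), β (star (SA a)) b = starRingEnd ℂ (β a (star b)))
    (hSBstar : ∀ (a : A) (b : B), β a (star (SB b)) = starRingEnd ℂ (β (star a) b))
    -- adjointness
    (hadj : ∀ (a : A) (b : B), β (SA a) b = β a (SB b))
    -- anti-multiplicativity (equivalent to the induced coproducts being *-maps)
    (hSAanti : ∀ a a' : A, SA (a * a') = SA a' * SA a)
    (hSBanti : ∀ b b' : B, SB (b * b') = SB b' * SB b)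
    -- the actions:  b ▷ a,  a ◁ b,  a ▷ b,  b ◁ a
    (actBA : B → A → A)
    (h1 : ∀ (a : A) (b b' : B), β (actBA b a) b' = β a (b' * b))
    (actABr : A → B → A)
    (h2 : ∀ (a : A) (b b' : B), β (actABr a b) b' = β a (b * b'))
    (actAB : A → B → B)
    (h3 : ∀ (a a' : A) (b : B), β a' (actAB a b) = β (a' * a) b)
    (actBAr : B → A → B)
    (h4 : ∀ (a a' : A) (b : B), β a' (actBAr b a) = β (a * a') b) :
    (∀ (a : A) (b : B), SA (actBA (SB b) a) = actABr (SA a) b) ∧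
    (∀ (a : A) (b : B), SB (actAB (SA a) b) = actBAr (SB b) a) := by
  constructor
  · intro a b
    apply sub_eq_zero.mp
    apply hβA
    intro b'
    rw [map_sub, LinearMap.sub_apply, hadj, h1, ← hSBanti, ← hadj, h2, sub_self]
  · intro a b
    apply sub_eq_zero.mp
    apply hβB
    intro a'
    rw [map_sub, ← hadj, h3, ← hSAanti, hadj, h4, sub_self]
end

section
/- Let A be a finite-dimensional unital algebra with coassociative coproduct Δ admitting a counit ε, and let φ be a faithful left integral on A with associated map S (i.e., S((ι ⊗ φ)(Δ(a)(1 ⊗ c))) = (ι ⊗ φ)((1 ⊗ a)Δ(c)) for all a, c). Then S is unique and bijective, and its adjoint on the dual algebra B is an anti-homomorphism (equivalently, S flips the coproduct on A). -/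
open TensorProduct

/-- `(ε ⊗ ι)` as a map `A ⊗ A → A`. -/
noncomputable def lmapC {A : Type*} [AddCommGroup A] [Module ℂ A]
    (ε : A →ₗ[ℂ] ℂ) : A ⊗[ℂ] A →ₗ[ℂ] A :=
  (TensorProduct.lid ℂ A).toLinearMap ∘ₗ TensorProduct.map ε LinearMap.id

/-- `(ι ⊗ ε)` as a map `A ⊗ A → A`. -/
noncomputable def rmapC {A : Type*} [AddCommGroup A] [Module ℂ A]
    (ε : A →ₗ[ℂ] ℂ) : A ⊗[ℂ] A →ₗ[ℂ] A :=
  (TensorProduct.rid ℂ A).toLinearMap ∘ₗ TensorProduct.map LinearMap.id ε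

set_option synthInstance.maxHeartbeats 400000
set_option maxHeartbeats 1600000

namespace Antipode11

variable {A : Type*} [Ring A] [Algebra ℂ A]

/-- Multiplication `ℂ ⊗ ℂ → ℂ`. -/
noncomputable abbrev mC : ℂ ⊗[ℂ] ℂ →ₗ[ℂ] ℂ := LinearMap.mul' ℂ ℂ

/-- Convolution product on the dual space. -/
noncomputable def conv (Δ : A →ₗ[ℂ] A ⊗[ℂ] A) (ω η : Module.Dual ℂ A) :
    Module.Dual ℂ A :=
  mC ∘ₗ (TensorProduct.map ω η) ∘ₗ Δ

lemma conv_apply (Δ : A →ₗ[ℂ] A ⊗[ℂ] A) (ω η : Module.Dual ℂ A) (x : A) :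
    conv Δ ω η x = mC (TensorProduct.map ω η (Δ x)) := rfl

/-- `hatL φ c = φ (· * c)`. -/
noncomputable def hatL (φ : Module.Dual ℂ A) : A →ₗ[ℂ] Module.Dual ℂ A :=
  (LinearMap.llcomp ℂ A A ℂ φ) ∘ₗ (LinearMap.mul ℂ A).flip

/-- `chkL φ a = φ (a * ·)`. -/
noncomputable def chkL (φ : Module.Dual ℂ A) : A →ₗ[ℂ] Module.Dual ℂ A :=
  (LinearMap.llcomp ℂ A A ℂ φ) ∘ₗ (LinearMap.mul ℂ A)

@[simp] lemma hatL_apply (φ : Module.Dual ℂ A) (c a : A) :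
    hatL φ c a = φ (a * c) := rfl

@[simp] lemma chkL_apply (φ : Module.Dual ℂ A) (a c : A) :
    chkL φ a c = φ (a * c) := rfl

lemma rmapC_tmul (φ : Module.Dual ℂ A) (x y : A) :
    rmapC φ (x ⊗ₜ[ℂ] y) = φ y • x := by
  simp [rmapC]

lemma eval_rmapC_mul_right (φ ω : Module.Dual ℂ A) (c : A) (t : A ⊗[ℂ] A) :
    ω (rmapC φ (t * ((1 : A) ⊗ₜ[ℂ] c))) = mC (TensorProduct.map ω (hatL φ c) t) := by
  induction t with
  | zero => simp
  | tmul x y =>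
      rw [Algebra.TensorProduct.tmul_mul_tmul, rmapC_tmul]
      simp [mul_comm]
  | add u v hu hv => rw [add_mul, map_add, map_add, map_add, map_add, hu, hv]

lemma eval_rmapC_mul_left (φ ω : Module.Dual ℂ A) (a : A) (t : A ⊗[ℂ] A) :
    ω (rmapC φ (((1 : A) ⊗ₜ[ℂ] a) * t)) = mC (TensorProduct.map ω (chkL φ a) t) := by
  induction t with
  | zero => simp
  | tmul x y =>
      rw [Algebra.TensorProduct.tmul_mul_tmul, rmapC_tmul]
      simp [mul_comm]
  | add u v hu hv => rw [mul_add, map_add, map_add, map_add, map_add, hu, hv]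

variable (Δ : A →ₗ[ℂ] A ⊗[ℂ] A) (φ : Module.Dual ℂ A)

/-- Evaluation of a functional against `x_{a,c}`. -/
lemma eval_x (ω : Module.Dual ℂ A) (a c : A) :
    ω (rmapC φ (Δ a * ((1 : A) ⊗ₜ[ℂ] c))) = conv Δ ω (hatL φ c) a :=
  eval_rmapC_mul_right φ ω c (Δ a)

/-- Evaluation of a functional against `y_{a,c}`. -/
lemma eval_y (ω : Module.Dual ℂ A) (a c : A) :
    ω (rmapC φ (((1 : A) ⊗ₜ[ℂ] a) * Δ c)) = conv Δ ω (chkL φ a) c :=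
  eval_rmapC_mul_left φ ω a (Δ c)

/-- Associativity of convolution. -/
lemma conv_assoc
    (hcoassoc : ∀ a : A,
      (TensorProduct.assoc ℂ A A A) (TensorProduct.map Δ LinearMap.id (Δ a)) =
        TensorProduct.map LinearMap.id Δ (Δ a))
    (ω η θ : Module.Dual ℂ A) :
    conv Δ (conv Δ ω η) θ = conv Δ ω (conv Δ η θ) := by
  ext x
  have key : ∀ s : (A ⊗[ℂ] A) ⊗[ℂ] A,
      mC (TensorProduct.map (mC ∘ₗ TensorProduct.map ω η) θ s) =
      mC (TensorProduct.map ω (mC ∘ₗ TensorProduct.map η θ)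
        ((TensorProduct.assoc ℂ A A A) s)) := by
    intro s
    induction s with
    | zero =>
        rw [show ((TensorProduct.assoc ℂ A A A) (0 : (A ⊗[ℂ] A) ⊗[ℂ] A)) = 0 from
          (TensorProduct.assoc ℂ A A A).map_zero]
        rw [map_zero, map_zero, map_zero, map_zero]
    | tmul t w =>
        induction t with
        | zero => simp
        | tmul u v => simp [mul_assoc]
        | add p q hp hq =>
            rw [TensorProduct.add_tmul, map_add, map_add, map_add, map_add, map_add,
              hp, hq]
    | add p q hp hq => rw [map_add, map_add, map_add, map_add, map_add, hp, hq]
  have h1 : conv Δ (conv Δ ω η) θ x =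
      mC (TensorProduct.map (mC ∘ₗ TensorProduct.map ω η) θ
        (TensorProduct.map Δ LinearMap.id (Δ x))) := by
    rw [conv_apply]
    congr 1
    have : TensorProduct.map (conv Δ ω η) θ =
        (TensorProduct.map (mC ∘ₗ TensorProduct.map ω η) θ) ∘ₗ
          (TensorProduct.map Δ LinearMap.id) := by
      rw [← TensorProduct.map_comp]
      rfl
    rw [this]
    rfl
  have h2 : conv Δ ω (conv Δ η θ) x =
      mC (TensorProduct.map ω (mC ∘ₗ TensorProduct.map η θ)
        (TensorProduct.map LinearMap.id Δ (Δ x))) := by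
    rw [conv_apply]
    congr 1
    have : TensorProduct.map ω (conv Δ η θ) =
        (TensorProduct.map ω (mC ∘ₗ TensorProduct.map η θ)) ∘ₗ
          (TensorProduct.map LinearMap.id Δ) := by
      rw [← TensorProduct.map_comp]
      rfl
    rw [this]
    rfl
  rw [h1, h2, ← hcoassoc x, key]

/-- Left unit law for convolution. -/
lemma conv_counit_left (ε : A →ₗ[ℂ] ℂ) (hε₁ : ∀ a : A, lmapC ε (Δ a) = a)
    (ω : Module.Dual ℂ A) : conv Δ ε ω = ω := by
  ext x
  have key : ∀ t : A ⊗[ℂ] A, mC (TensorProduct.map ε ω t) = ω (lmapC ε t) := by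
    intro t
    induction t with
    | zero => simp
    | tmul u v => simp [lmapC]
    | add p q hp hq => rw [map_add, map_add, map_add, map_add, hp, hq]
  rw [conv_apply, key, hε₁]

/-- Right unit law for convolution. -/
lemma conv_counit_right (ε : A →ₗ[ℂ] ℂ) (hε₂ : ∀ a : A, rmapC ε (Δ a) = a)
    (ω : Module.Dual ℂ A) : conv Δ ω ε = ω := by
  ext x
  have key : ∀ t : A ⊗[ℂ] A, mC (TensorProduct.map ω ε t) = ω (rmapC ε t) := by
    intro t
    induction t with
    | zero => simp
    | tmul u v => simp [rmapC, mul_comm]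
    | add p q hp hq => rw [map_add, map_add, map_add, map_add, hp, hq]
  rw [conv_apply, key, hε₂]

variable [FiniteDimensional ℂ A]

lemma hatL_surj (hφ₂ : ∀ c : A, (∀ a : A, φ (a * c) = 0) → c = 0) :
    Function.Surjective (hatL φ) := by
  have hinj : Function.Injective (hatL φ) := by
    rw [← LinearMap.ker_eq_bot]
    refine (Submodule.eq_bot_iff _).mpr fun c hc => ?_
    exact hφ₂ c fun a => by
      simpa using DFunLike.congr_fun (LinearMap.mem_ker.mp hc) a
  exact (LinearMap.injective_iff_surjective_of_finrank_eq_finrank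
    (Subspace.dual_finrank_eq).symm).mp hinj

lemma chkL_surj (hφ₁ : ∀ a : A, (∀ c : A, φ (a * c) = 0) → a = 0) :
    Function.Surjective (chkL φ) := by
  have hinj : Function.Injective (chkL φ) := by
    rw [← LinearMap.ker_eq_bot]
    refine (Submodule.eq_bot_iff _).mpr fun a ha => ?_
    exact hφ₁ a fun c => by
      simpa using DFunLike.congr_fun (LinearMap.mem_ker.mp ha) c
  exact (LinearMap.injective_iff_surjective_of_finrank_eq_finrank
    (Subspace.dual_finrank_eq).symm).mp hinj

/-- Pairs of functionals separate points of `A ⊗ A`. -/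
lemma tensor_sep (t : A ⊗[ℂ] A)
    (h : ∀ ω η : Module.Dual ℂ A, mC (TensorProduct.map ω η t) = 0) : t = 0 := by
  have key : ∀ (ω η : Module.Dual ℂ A) (u : A ⊗[ℂ] A),
      TensorProduct.dualDistrib ℂ A A (ω ⊗ₜ[ℂ] η) u = mC (TensorProduct.map ω η u) := by
    intro ω η u
    induction u with
    | zero => simp
    | tmul x y => simp [TensorProduct.dualDistrib_apply]
    | add p q hp hq => rw [map_add, map_add, map_add, hp, hq]
  rw [← Module.forall_dual_apply_eq_zero_iff ℂ t]
  intro f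
  obtain ⟨g, rfl⟩ := (TensorProduct.dualDistribEquiv ℂ A A).surjective f
  have hg : ∀ g₀ : Module.Dual ℂ A ⊗[ℂ] Module.Dual ℂ A,
      TensorProduct.dualDistrib ℂ A A g₀ t = 0 := by
    intro g₀
    induction g₀ with
    | zero => simp
    | tmul ω η => rw [key]; exact h ω η
    | add p q hp hq =>
        rw [map_add, LinearMap.add_apply, hp, hq, add_zero]
  have : (TensorProduct.dualDistribEquiv ℂ A A) g = TensorProduct.dualDistrib ℂ A A g := by
    simp [TensorProduct.dualDistribEquiv, TensorProduct.dualDistribEquivOfBasis]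
  rw [this]
  exact hg g

/-- A submodule on which only the zero functional vanishes is everything. -/
lemma eq_top_of_dual (W : Submodule ℂ A)
    (h : ∀ ω : Module.Dual ℂ A, (∀ x ∈ W, ω x = 0) → ω = 0) : W = ⊤ := by
  by_contra hW
  have hv : ∃ v, v ∉ W := by
    by_contra h'
    push_neg at h'
    exact hW (Submodule.eq_top_iff'.mpr h')
  obtain ⟨v, hv⟩ := hv
  have hv0 : W.mkQ v ≠ 0 := by
    simpa [Submodule.mkQ_apply, Submodule.Quotient.mk_eq_zero] using hv
  have hng : ¬ ∀ g : Module.Dual ℂ (A ⧸ W), g (W.mkQ v) = 0 := by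
    intro hall
    exact hv0 ((Module.forall_dual_apply_eq_zero_iff ℂ (W.mkQ v)).mp hall)
  push_neg at hng
  obtain ⟨g, hg⟩ := hng
  have hzero : (g ∘ₗ W.mkQ) = 0 := by
    refine h (g ∘ₗ W.mkQ) fun x hx => ?_
    simp [Submodule.mkQ_apply, (Submodule.Quotient.mk_eq_zero W).mpr hx]
  exact hg (by simpa using DFunLike.congr_fun hzero v)

end Antipode11

open Antipode11

/-- For a finite-dimensional unital ℂ-algebra `A` with coassociative
coproduct `Δ` and counit `ε`, and a faithful left integral `φ` with associated map
`S` (i.e. `S((ι ⊗ φ)(Δ(a)(1 ⊗ c))) = (ι ⊗ φ)((1 ⊗ a)Δ(c))`), the map `S` is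
unique, bijective, and flips the coproduct (equivalently, its adjoint on the dual
algebra is an anti-homomorphism). -/
theorem antipode_of_faithful_left_integral_unique_bijective_flips
    {A : Type*} [Ring A] [Algebra ℂ A] [FiniteDimensional ℂ A]
    (Δ : A →ₗ[ℂ] A ⊗[ℂ] A)
    (hcoassoc : ∀ a : A,
      (TensorProduct.assoc ℂ A A A) (TensorProduct.map Δ LinearMap.id (Δ a)) =
        TensorProduct.map LinearMap.id Δ (Δ a))
    (ε : A →ₗ[ℂ] ℂ)
    (hε₁ : ∀ a : A, lmapC ε (Δ a) = a)
    (hε₂ : ∀ a : A, rmapC ε (Δ a) = a)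
    (φ : A →ₗ[ℂ] ℂ)
    (hφ₁ : ∀ a : A, (∀ c : A, φ (a * c) = 0) → a = 0)
    (hφ₂ : ∀ c : A, (∀ a : A, φ (a * c) = 0) → c = 0)
    (S : A →ₗ[ℂ] A)
    (hS : ∀ a c : A,
      S (rmapC φ (Δ a * ((1 : A) ⊗ₜ[ℂ] c))) = rmapC φ (((1 : A) ⊗ₜ[ℂ] a) * Δ c)) :
    Function.Bijective S ∧
    (∀ S' : A →ₗ[ℂ] A,
      (∀ a c : A,
        S' (rmapC φ (Δ a * ((1 : A) ⊗ₜ[ℂ] c))) = rmapC φ (((1 : A) ⊗ₜ[ℂ] a) * Δ c)) →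
      S' = S) ∧
    (∀ a : A, Δ (S a) = (TensorProduct.comm ℂ A A) (TensorProduct.map S S (Δ a))) := by
  classical
  have hat_surj := hatL_surj φ hφ₂
  have chk_surj := chkL_surj φ hφ₁
  -- The dualized hypothesis (‡)
  have dag : ∀ (ω : Module.Dual ℂ A) (a c : A),
      conv Δ (ω ∘ₗ S) (hatL φ c) a = conv Δ ω (chkL φ a) c := by
    intro ω a c
    have h := congrArg ω (hS a c)
    rwa [eval_y Δ φ ω a c, show ω (S (rmapC φ (Δ a * ((1 : A) ⊗ₜ[ℂ] c)))) =
      (ω ∘ₗ S) (rmapC φ (Δ a * ((1 : A) ⊗ₜ[ℂ] c))) from rfl,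
      eval_x Δ φ (ω ∘ₗ S) a c] at h
  -- key2 : ∀ η θ a b, chkL φ b = conv Δ η (chkL φ a) → conv Δ (η∘S) θ a = θ b
  have key2 : ∀ (η θ : Module.Dual ℂ A) (a b : A),
      chkL φ b = conv Δ η (chkL φ a) → conv Δ (η ∘ₗ S) θ a = θ b := by
    intro η θ a b hb
    obtain ⟨c, rfl⟩ := hat_surj θ
    rw [dag η a c, ← hb]
    simp
  -- spanning of the x's
  have span_x : Submodule.span ℂ
      {x : A | ∃ a c : A, x = rmapC φ (Δ a * ((1 : A) ⊗ₜ[ℂ] c))} = ⊤ := by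
    apply eq_top_of_dual
    intro ω hω
    have h1 : ∀ c : A, conv Δ ω (hatL φ c) = 0 := by
      intro c
      ext a
      rw [← eval_x Δ φ ω a c]
      exact hω _ (Submodule.subset_span ⟨a, c, rfl⟩)
    have h2 : ∀ η : Module.Dual ℂ A, conv Δ ω η = 0 := by
      intro η
      obtain ⟨c, rfl⟩ := hat_surj η
      exact h1 c
    rw [← conv_counit_right Δ ε hε₂ ω]
    exact h2 ε
  -- spanning of the y's
  have span_y : Submodule.span ℂ
      {y : A | ∃ a c : A, y = rmapC φ (((1 : A) ⊗ₜ[ℂ] a) * Δ c)} = ⊤ := by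
    apply eq_top_of_dual
    intro ω hω
    have h1 : ∀ a : A, conv Δ ω (chkL φ a) = 0 := by
      intro a
      ext c
      rw [← eval_y Δ φ ω a c]
      exact hω _ (Submodule.subset_span ⟨a, c, rfl⟩)
    have h2 : ∀ η : Module.Dual ℂ A, conv Δ ω η = 0 := by
      intro η
      obtain ⟨a, rfl⟩ := chk_surj η
      exact h1 a
    rw [← conv_counit_right Δ ε hε₂ ω]
    exact h2 ε
  -- surjectivity of S
  have hSsurj : Function.Surjective S := by
    rw [← LinearMap.range_eq_top]
    rw [← top_le_iff, ← span_y]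
    rw [Submodule.span_le]
    rintro y ⟨a, c, rfl⟩
    exact ⟨rmapC φ (Δ a * ((1 : A) ⊗ₜ[ℂ] c)), hS a c⟩
  have hSbij : Function.Bijective S :=
    ⟨LinearMap.injective_iff_surjective.mpr hSsurj, hSsurj⟩
  refine ⟨hSbij, ?_, ?_⟩
  · -- uniqueness
    intro S' hS'
    apply LinearMap.ext_on span_x
    rintro x ⟨a, c, rfl⟩
    rw [hS' a c, hS a c]
  · -- the flip property; first, anti-multiplicativity of the adjoint of S
    have antimul : ∀ ω η : Module.Dual ℂ A,
        (conv Δ ω η) ∘ₗ S = conv Δ (η ∘ₗ S) (ω ∘ₗ S) := by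
      intro ω η
      ext a
      obtain ⟨b, hb⟩ := chk_surj (conv Δ η (chkL φ a))
      obtain ⟨c₀, hc₀⟩ := hat_surj (ε : Module.Dual ℂ A)
      -- key1
      have key1 : ∀ c : A, conv Δ ((conv Δ ω η) ∘ₗ S) (hatL φ c) a =
          conv Δ (ω ∘ₗ S) (hatL φ c) b := by
        intro c
        rw [dag (conv Δ ω η) a c, conv_assoc Δ hcoassoc ω η (chkL φ a), ← hb,
          ← dag ω b c]
      have e1 : ((conv Δ ω η) ∘ₗ S) a =
          conv Δ ((conv Δ ω η) ∘ₗ S) (hatL φ c₀) a := by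
        rw [hc₀, conv_counit_right Δ ε hε₂]
      have e2 : conv Δ (ω ∘ₗ S) (hatL φ c₀) b =
          conv Δ (η ∘ₗ S) (conv Δ (ω ∘ₗ S) (hatL φ c₀)) a :=
        (key2 η (conv Δ (ω ∘ₗ S) (hatL φ c₀)) a b hb).symm
      have e3 : conv Δ (η ∘ₗ S) (conv Δ (ω ∘ₗ S) (hatL φ c₀)) a =
          conv Δ (conv Δ (η ∘ₗ S) (ω ∘ₗ S)) (hatL φ c₀) a := by
        rw [conv_assoc Δ hcoassoc]
      have e4 : conv Δ (conv Δ (η ∘ₗ S) (ω ∘ₗ S)) (hatL φ c₀) a =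
          conv Δ (η ∘ₗ S) (ω ∘ₗ S) a := by
        rw [hc₀, conv_counit_right Δ ε hε₂]
      calc ((conv Δ ω η) ∘ₗ S) a
          = conv Δ ((conv Δ ω η) ∘ₗ S) (hatL φ c₀) a := e1
        _ = conv Δ (ω ∘ₗ S) (hatL φ c₀) b := key1 c₀
        _ = conv Δ (η ∘ₗ S) (conv Δ (ω ∘ₗ S) (hatL φ c₀)) a := e2
        _ = conv Δ (conv Δ (η ∘ₗ S) (ω ∘ₗ S)) (hatL φ c₀) a := e3
        _ = conv Δ (η ∘ₗ S) (ω ∘ₗ S) a := e4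
    -- now deduce the flip
    intro a
    rw [← sub_eq_zero]
    apply tensor_sep
    intro ω η
    have comm_eval : ∀ u : A ⊗[ℂ] A,
        mC (TensorProduct.map ω η ((TensorProduct.comm ℂ A A)
          (TensorProduct.map S S u))) =
        mC (TensorProduct.map (η ∘ₗ S) (ω ∘ₗ S) u) := by
      intro u
      induction u with
      | zero => simp
      | tmul p q => simp [mul_comm]
      | add p q hp hq =>
          rw [map_add, map_add, map_add, map_add, map_add, map_add, hp, hq]
    have hl : mC (TensorProduct.map ω η (Δ (S a))) =
        mC (TensorProduct.map (η ∘ₗ S) (ω ∘ₗ S) (Δ a)) := by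
      have h := DFunLike.congr_fun (antimul ω η) a
      rw [show ((conv Δ ω η) ∘ₗ S) a = conv Δ ω η (S a) from rfl, conv_apply,
        conv_apply] at h
      exact h
    rw [map_sub, map_sub, hl, comm_eval (Δ a), sub_self]
end

section
/- Let A be a finite-dimensional unital algebra with coproduct Δ admitting a counit. If there exists a non-zero left invariant linear functional φ on A (i.e., (ι ⊗ φ)Δ(a) = φ(a)·1 for all a), then Δ(1) = 1 ⊗ 1. -/
open TensorProduct

lemma rmapC_tmul {A : Type*} [AddCommGroup A] [Module ℂ A]
    (φ : A →ₗ[ℂ] ℂ) (a b : A) : rmapC φ (a ⊗ₜ[ℂ] b) = φ b • a := by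
  simp [rmapC]

/-- If a finite-dimensional unital ℂ-algebra `A` with coassociative
coproduct `Δ` admitting a counit `ε` has a non-zero left invariant functional `φ`
(i.e. `(ι ⊗ φ)(Δ a) = φ(a)·1`), then `Δ 1 = 1 ⊗ 1`. -/
theorem coprod_unital_of_left_invariant
    {A : Type*} [Ring A] [Algebra ℂ A] [FiniteDimensional ℂ A]
    (Δ : A →ₗ[ℂ] A ⊗[ℂ] A)
    (hcoassoc : ∀ a : A,
      (TensorProduct.assoc ℂ A A A) (TensorProduct.map Δ LinearMap.id (Δ a)) =
        TensorProduct.map LinearMap.id Δ (Δ a))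
    (ε : A →ₗ[ℂ] ℂ)
    (hε₁ : ∀ a : A, lmapC ε (Δ a) = a)
    (hε₂ : ∀ a : A, rmapC ε (Δ a) = a)
    (φ : A →ₗ[ℂ] ℂ) (hφ : φ ≠ 0)
    (hinv : ∀ a : A, rmapC φ (Δ a) = φ a • (1 : A)) :
    Δ 1 = (1 : A) ⊗ₜ[ℂ] (1 : A) := by
  -- pick a with φ a ≠ 0
  obtain ⟨a, ha⟩ : ∃ a : A, φ a ≠ 0 := by
    by_contra h
    push_neg at h
    exact hφ (LinearMap.ext fun x => h x)
  -- Lemma A: (ι ⊗ (ι⊗φ)) ∘ assoc ∘ (Δ ⊗ ι) = Δ ∘ (ι⊗φ)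
  have hA : ∀ t : A ⊗[ℂ] A,
      TensorProduct.map LinearMap.id (rmapC φ)
        ((TensorProduct.assoc ℂ A A A) (TensorProduct.map Δ LinearMap.id t)) =
      Δ (rmapC φ t) := by
    intro t
    induction t using TensorProduct.induction_on with
    | zero => rw [LinearMap.map_zero, LinearEquiv.map_zero, LinearMap.map_zero, LinearMap.map_zero, LinearMap.map_zero]
    | add x y hx hy => simp [map_add, hx, hy]
    | tmul x y =>
      rw [TensorProduct.map_tmul, LinearMap.id_apply, rmapC_tmul, map_smul]
      induction Δ x using TensorProduct.induction_on with
      | zero => rw [TensorProduct.zero_tmul, LinearEquiv.map_zero, LinearMap.map_zero, smul_zero]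
      | add u v hu hv => simp [add_tmul, map_add, hu, hv, smul_add]
      | tmul c d => simp [rmapC_tmul, TensorProduct.tmul_smul]
  -- Lemma B: (ι ⊗ (ι⊗φ)) ∘ (ι ⊗ Δ) = (· ⊗ 1) ∘ (ι⊗φ)
  have hB : ∀ t : A ⊗[ℂ] A,
      TensorProduct.map LinearMap.id (rmapC φ)
        (TensorProduct.map LinearMap.id Δ t) =
      (rmapC φ t) ⊗ₜ[ℂ] (1 : A) := by
    intro t
    induction t using TensorProduct.induction_on with
    | zero => simp
    | add x y hx hy => simp [map_add, hx, hy, add_tmul]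
    | tmul x y =>
      simp only [TensorProduct.map_tmul, LinearMap.id_apply, rmapC_tmul, hinv,
        TensorProduct.tmul_smul, TensorProduct.smul_tmul']
  have key := congrArg (TensorProduct.map (LinearMap.id : A →ₗ[ℂ] A) (rmapC φ)) (hcoassoc a)
  rw [hA, hB, hinv, map_smul, ← TensorProduct.smul_tmul'] at key
  have := smul_right_injective (A ⊗[ℂ] A) ha key
  simpa using this
end

section
/- Let G be a finite group with subgroup H of order n, let A be the algebra of complex functions on G constant on double cosets HxH (with pointwise product), and define Δ on A by Δ(f)(p, q) = (1/n)·Σ_{h∈H} f(phq). Then Δ is an algebra homomorphism from A to A ⊗ A if and only if H is a normal subgroup of G. -/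
open scoped BigOperators

/-- Let `G` be a finite group and `H` a subgroup of order `n`. On
the algebra of functions constant on double cosets `HxH` (pointwise product),
with coproduct `Δ(f)(p, q) = (1/n) Σ_{h ∈ H} f(p h q)` (viewed pointwise on
`G × G`), the coproduct `Δ` is an algebra homomorphism if and only if `H` is a
normal subgroup of `G`. -/
theorem hecke_coproduct_hom_iff_normal
    {G : Type*} [Group G] [Fintype G] (H : Subgroup G) [DecidablePred (· ∈ H)] :
    (∀ f g : G → ℂ,
        (∀ h ∈ H, ∀ k ∈ H, ∀ p : G, f (h * p * k) = f p) →
        (∀ h ∈ H, ∀ k ∈ H, ∀ p : G, g (h * p * k) = g p) →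
        ∀ p q : G,
          (1 / (Nat.card H : ℂ)) *
              ∑ h ∈ Finset.univ.filter (· ∈ H), (f * g) (p * h * q) =
            ((1 / (Nat.card H : ℂ)) *
                ∑ h ∈ Finset.univ.filter (· ∈ H), f (p * h * q)) *
              ((1 / (Nat.card H : ℂ)) *
                ∑ h ∈ Finset.univ.filter (· ∈ H), g (p * h * q))) ↔
      H.Normal := by
  have hc0 : (Nat.card H : ℂ) ≠ 0 := by
    have : 0 < Nat.card H := Nat.card_pos
    exact_mod_cast this.ne'
  have hTcard : (Finset.univ.filter (· ∈ H)).card = Nat.card H := by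
    rw [Nat.card_eq_fintype_card, Fintype.card_subtype]
  constructor
  · intro hyp
    set f : G → ℂ := fun x => if x ∈ H then 1 else 0 with hfdef
    have hf : ∀ h ∈ H, ∀ k ∈ H, ∀ p : G, f (h * p * k) = f p := by
      intro h hh k hk p
      simp only [hfdef]
      congr 1
      simp only [eq_iff_iff]
      constructor
      · intro hm
        have : h⁻¹ * (h * p * k) * k⁻¹ ∈ H := H.mul_mem (H.mul_mem (H.inv_mem hh) hm) (H.inv_mem hk)
        simpa [mul_assoc] using this
      · intro hm
        exact H.mul_mem (H.mul_mem hh hm) hk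
    constructor
    intro n hn g
    have key := hyp f f hf hf g g⁻¹
    have hff : ∀ x : G, (f * f) x = f x := by
      intro x; simp only [Pi.mul_apply, hfdef]; split <;> simp
    simp only [hff] at key
    set s : ℕ := ((Finset.univ.filter (· ∈ H)).filter (fun h => g * h * g⁻¹ ∈ H)).card with hsdef
    have hsum : ∑ h ∈ Finset.univ.filter (· ∈ H), f (g * h * g⁻¹) = (s : ℂ) := by
      simp only [hfdef]
      rw [Finset.sum_boole]
    rw [hsum] at key
    -- key : (1/c) * s = ((1/c)*s) * ((1/c)*s)
    have hs0 : s ≠ 0 := by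
      rw [hsdef]
      rw [Finset.card_ne_zero]
      exact ⟨1, by simp [H.one_mem]⟩
    have hsc : (s : ℂ) = (Nat.card H : ℂ) := by
      have hF0 : ((Fintype.card H : ℂ)) ≠ 0 := by
        exact Nat.card_eq_fintype_card (α := H) ▸ hc0
      have h1 : (s : ℂ) * (Nat.card H : ℂ) = (s : ℂ) * (s : ℂ) := by
        rw [Nat.card_eq_fintype_card]
        apply mul_right_cancel₀ hF0
        field_simp at key
        rw [Nat.card_eq_fintype_card] at key
        rw [key]
      have := mul_left_cancel₀ (a := (s : ℂ)) (by exact_mod_cast hs0) h1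
      exact this.symm
    have hcard : ((Finset.univ.filter (· ∈ H)).filter (fun h => g * h * g⁻¹ ∈ H)).card
        = (Finset.univ.filter (· ∈ H)).card := by
      rw [hTcard]
      exact_mod_cast hsc
    have heq := Finset.eq_of_subset_of_card_le (Finset.filter_subset _ _) (le_of_eq hcard.symm)
    have hmem : n ∈ (Finset.univ.filter (· ∈ H)) := by simp [hn]
    rw [← heq] at hmem
    exact (Finset.mem_filter.mp hmem).2
  · intro hN f g hf hg p q
    have hconst : ∀ (F : G → ℂ), (∀ h ∈ H, ∀ k ∈ H, ∀ p : G, F (h * p * k) = F p) →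
        ∑ h ∈ Finset.univ.filter (· ∈ H), F (p * h * q) = (Nat.card H : ℂ) * F (p * q) := by
      intro F hF
      have : ∀ h ∈ Finset.univ.filter (· ∈ H), F (p * h * q) = F (p * q) := by
        intro h hh
        have hh' : h ∈ H := (Finset.mem_filter.mp hh).2
        have hk : q⁻¹ * h * q ∈ H := hN.conj_mem' h hh' q
        have := hF 1 H.one_mem (q⁻¹ * h * q) hk (p * q)
        simpa [mul_assoc] using this
      rw [Finset.sum_congr rfl this, Finset.sum_const, hTcard, nsmul_eq_mul]
    rw [hconst (f * g) (fun h hh k hk r => by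
        simp only [Pi.mul_apply, hf h hh k hk r, hg h hh k hk r]),
      hconst f hf, hconst g hg]
    simp only [Pi.mul_apply]
    field_simp
end
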